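/- arXiv:1301.0106 — 2 statements merged into one kernel-verified Lean document; each statement's English description precedes it below -/
import Mathlib

section
/- Let r > 1 and p⁰, q⁰ ≥ 1. Suppose p'⁰, q'⁰ ≥ 1 satisfy p'⁰ + q'⁰ = p⁰ + q⁰ and p'⁰ ≤ (√(p⁰) + √(q⁰))²/2. Then G := (p'⁰)^r + (q'⁰)^r − (p⁰)^r − (q⁰)^r satisfies G ≤ C_r ((p⁰)^{r−1/2}(q⁰)^{1/2} + (p⁰)^{1/2}(q⁰)^{r−1/2}) − c_r ((p⁰)^r + (q⁰)^r), where C_r, c_r > 0 depend only on r (one may take c_r = 1 − 2^{2−r} for r > 2, or argue via (a+b)^{2r} ≤ a^{2r}+b^{2r}+C_r(a^{2r−1}b+ab^{2r−1}) with a=√(p⁰), b=√(q⁰)). -/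
open Real

lemma povzner_num (e : ℝ) (he0 : 0 < e) (he1 : e ≤ 1) :
    (1 + e * ((1 + e / 10) ^ 2 / 2 - 1)) * (1 + (e / 10) ^ 2) ≤ 1 - e / 4 := by
  have h2 : e ^ 2 ≤ e := by nlinarith
  have h4 : e ^ 4 ≤ e := by nlinarith [sq_nonneg e, sq_nonneg (e - 1), pow_le_one₀ he0.le he1 (n := 4)]
  have h5 : e ^ 5 ≤ e := by nlinarith [pow_le_one₀ he0.le he1 (n := 4), he0.le]
  nlinarith [h2, h4, h5, he0]

set_option maxHeartbeats 1600000 in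
lemma povzner_key (r e : ℝ) (hr : 1 < r) (he : e = min (r - 1) 1)
    (p0 q0 p'0 q'0 : ℝ) (hp0 : 1 ≤ p0) (hq0 : 1 ≤ q0) (hord : q0 ≤ p0)
    (hp'0 : 1 ≤ p'0) (hq'0 : 1 ≤ q'0)
    (hsum : p'0 + q'0 = p0 + q0)
    (hang : p'0 ≤ (Real.sqrt p0 + Real.sqrt q0) ^ 2 / 2)
    (hqp : q'0 ≤ p'0) :
    p'0 ^ r + q'0 ^ r - p0 ^ r - q0 ^ r ≤
      (2 ^ r / (e / 10)) * (p0 ^ (r - 1 / 2) * q0 ^ (1 / 2 : ℝ)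
          + p0 ^ (1 / 2 : ℝ) * q0 ^ (r - 1 / 2))
        - (e / 4) * (p0 ^ r + q0 ^ r) := by
  have he0 : 0 < e := by rw [he]; exact lt_min (by linarith) one_pos
  have he1 : e ≤ 1 := by rw [he]; exact min_le_right _ _
  have her : e ≤ r - 1 := by rw [he]; exact min_le_left _ _
  set s := e / 10 with hs_def
  have hs0 : 0 < s := by rw [hs_def]; linarith
  have hs1 : s ≤ 1 / 10 := by rw [hs_def]; linarith
  have hp0' : (0:ℝ) < p0 := by linarith
  have hq0' : (0:ℝ) < q0 := by linarith
  have hp'pos : (0:ℝ) < p'0 := by linarith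
  have hq'pos : (0:ℝ) < q'0 := by linarith
  have hr1 : (0:ℝ) ≤ r - 1 := by linarith
  have hp0r : (0:ℝ) ≤ p0 ^ r := Real.rpow_nonneg hp0'.le r
  have hq0r : (0:ℝ) ≤ q0 ^ r := Real.rpow_nonneg hq0'.le r
  have hsa : Real.sqrt p0 ^ 2 = p0 := Real.sq_sqrt hp0'.le
  have hsb : Real.sqrt q0 ^ 2 = q0 := Real.sq_sqrt hq0'.le
  have hsba : Real.sqrt q0 ≤ Real.sqrt p0 := Real.sqrt_le_sqrt hord
  have h16 : p0 ^ (r - 1) * p0 = p0 ^ r := by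
    rw [← Real.rpow_add_one hp0'.ne' (r - 1)]; norm_num
  -- step 1 : p'0^r + q'0^r ≤ p'0^(r-1) * (p0+q0)
  have hstep1 : p'0 ^ r + q'0 ^ r ≤ p'0 ^ (r - 1) * (p0 + q0) := by
    have e1 : p'0 ^ r = p'0 ^ (r - 1) * p'0 := by
      rw [← Real.rpow_add_one hp'pos.ne' (r - 1)]; norm_num
    have e2 : q'0 ^ r = q'0 ^ (r - 1) * q'0 := by
      rw [← Real.rpow_add_one hq'pos.ne' (r - 1)]; norm_num
    have h3 : q'0 ^ (r - 1) ≤ p'0 ^ (r - 1) := Real.rpow_le_rpow hq'pos.le hqp hr1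
    have h4 : q'0 ^ (r - 1) * q'0 ≤ p'0 ^ (r - 1) * q'0 :=
      mul_le_mul_of_nonneg_right h3 hq'pos.le
    rw [e1, e2, ← hsum]
    nlinarith [h4]
  rcases le_total (s ^ 2 * p0) q0 with hcase | hcase
  · -- Case A : q0 ≥ s^2 * p0
    have hp2a : p'0 ≤ 2 * p0 := by
      nlinarith [hang, hsa, hsb, sq_nonneg (Real.sqrt p0 - Real.sqrt q0), hord]
    have h5 : p'0 ^ (r - 1) ≤ (2 * p0) ^ (r - 1) :=
      Real.rpow_le_rpow hp'pos.le hp2a hr1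
    have h6 : (2 * p0) ^ (r - 1) = 2 ^ (r - 1) * p0 ^ (r - 1) :=
      Real.mul_rpow (by norm_num) hp0'.le
    have h7 : (2:ℝ) ^ (r - 1) * 2 = 2 ^ r := by
      rw [← Real.rpow_add_one (by norm_num : (2:ℝ) ≠ 0) (r - 1)]; norm_num
    have h2r1 : (0:ℝ) ≤ (2:ℝ) ^ (r - 1) := Real.rpow_nonneg (by norm_num) _
    have hp0r1 : (0:ℝ) ≤ p0 ^ (r - 1) := Real.rpow_nonneg hp0'.le _
    have hA : p'0 ^ r + q'0 ^ r ≤ 2 ^ r * p0 ^ r := by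
      have hA1 : p'0 ^ (r - 1) * (p0 + q0) ≤ (2 * p0) ^ (r - 1) * (p0 + q0) :=
        mul_le_mul_of_nonneg_right h5 (by linarith)
      have hA2 : (2:ℝ) ^ (r - 1) * p0 ^ (r - 1) * (p0 + q0)
          ≤ 2 ^ (r - 1) * p0 ^ (r - 1) * (2 * p0) := by
        apply mul_le_mul_of_nonneg_left (by linarith) (by positivity)
      have hA3 : (2:ℝ) ^ (r - 1) * p0 ^ (r - 1) * (2 * p0) = 2 ^ r * p0 ^ r := by
        rw [← h7, ← h16]; ring
      rw [h6] at hA1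
      linarith [hstep1]
    -- lower bound on the C-term
    have h9 : (s ^ 2 * p0) ^ ((1:ℝ) / 2) = s * p0 ^ ((1:ℝ) / 2) := by
      rw [← Real.sqrt_eq_rpow, ← Real.sqrt_eq_rpow, Real.sqrt_mul (sq_nonneg s),
        Real.sqrt_sq hs0.le]
    have h10 : s * p0 ^ ((1:ℝ) / 2) ≤ q0 ^ ((1:ℝ) / 2) := by
      rw [← h9]
      exact Real.rpow_le_rpow (by positivity) hcase (by norm_num)
    have h11 : p0 ^ (r - 1 / 2) * p0 ^ ((1:ℝ) / 2) = p0 ^ r := by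
      rw [← Real.rpow_add hp0']; norm_num
    have hCT1 : 2 ^ r * p0 ^ r ≤ (2 ^ r / s) * (p0 ^ (r - 1 / 2) * q0 ^ ((1:ℝ) / 2)) := by
      have hm : (2 ^ r / s) * (p0 ^ (r - 1 / 2) * (s * p0 ^ ((1:ℝ) / 2)))
          ≤ (2 ^ r / s) * (p0 ^ (r - 1 / 2) * q0 ^ ((1:ℝ) / 2)) := by
        apply mul_le_mul_of_nonneg_left _ (by positivity)
        exact mul_le_mul_of_nonneg_left h10 (Real.rpow_nonneg hp0'.le _)
      have heq : (2 ^ r / s) * (p0 ^ (r - 1 / 2) * (s * p0 ^ ((1:ℝ) / 2)))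
          = 2 ^ r * p0 ^ r := by
        rw [show p0 ^ (r - 1 / 2) * (s * p0 ^ ((1:ℝ) / 2))
            = s * (p0 ^ (r - 1 / 2) * p0 ^ ((1:ℝ) / 2)) by ring, h11]
        field_simp
      linarith [hm, heq.symm.le]
    have hT2 : (0:ℝ) ≤ (2 ^ r / s) * (p0 ^ ((1:ℝ) / 2) * q0 ^ (r - 1 / 2)) := by positivity
    linarith [hA, hCT1, hT2, hp0r, hq0r,
      mul_nonneg (by linarith : (0:ℝ) ≤ 1 - e) hp0r,
      mul_nonneg (by linarith : (0:ℝ) ≤ 1 - e) hq0r]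
  · -- Case B : q0 ≤ s^2 * p0
    have hsq : Real.sqrt q0 ≤ s * Real.sqrt p0 := by
      have h := Real.sqrt_le_sqrt hcase
      rwa [Real.sqrt_mul (sq_nonneg s), Real.sqrt_sq hs0.le] at h
    have h12 : Real.sqrt p0 + Real.sqrt q0 ≤ (1 + s) * Real.sqrt p0 := by
      linarith [hsq]
    have h13 : (Real.sqrt p0 + Real.sqrt q0) * (Real.sqrt p0 + Real.sqrt q0)
        ≤ ((1 + s) * Real.sqrt p0) * ((1 + s) * Real.sqrt p0) :=
      mul_le_mul h12 h12 (by positivity)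
        (mul_nonneg (by linarith) (Real.sqrt_nonneg p0))
    have h13' : (Real.sqrt p0 + Real.sqrt q0) ^ 2 ≤ (1 + s) ^ 2 * p0 := by
      calc (Real.sqrt p0 + Real.sqrt q0) ^ 2
          = (Real.sqrt p0 + Real.sqrt q0) * (Real.sqrt p0 + Real.sqrt q0) := by ring
        _ ≤ ((1 + s) * Real.sqrt p0) * ((1 + s) * Real.sqrt p0) := h13
        _ = (1 + s) ^ 2 * Real.sqrt p0 ^ 2 := by ring
        _ = (1 + s) ^ 2 * p0 := by rw [hsa]
    have hB' : p'0 ≤ (1 + s) ^ 2 / 2 * p0 := by linarith [hang, h13']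
    set B := (1 + s) ^ 2 / 2 with hB_def
    have hBpos : 0 < B := by positivity
    have hBle1 : B ≤ 1 := by rw [hB_def]; nlinarith [hs0, hs1]
    have hBr : B ^ (r - 1) ≤ B ^ e := Real.rpow_le_rpow_of_exponent_ge hBpos hBle1 her
    have hBe : B ^ e ≤ 1 + e * (B - 1) := by
      have h := rpow_one_add_le_one_add_mul_self
        (show (-1:ℝ) ≤ B - 1 by linarith) he0.le he1
      rwa [show (1:ℝ) + (B - 1) = B by ring] at h
    have hnum : (1 + e * (B - 1)) * (1 + s ^ 2) ≤ 1 - e / 4 := by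
      rw [hB_def, hs_def]
      exact povzner_num e he0 he1
    have h14 : p'0 ^ (r - 1) ≤ (B * p0) ^ (r - 1) :=
      Real.rpow_le_rpow hp'pos.le hB' hr1
    have h15 : (B * p0) ^ (r - 1) = B ^ (r - 1) * p0 ^ (r - 1) :=
      Real.mul_rpow hBpos.le hp0'.le
    have h17 : p'0 ^ r + q'0 ^ r ≤ B ^ (r - 1) * p0 ^ (r - 1) * (p0 + q0) := by
      have := mul_le_mul_of_nonneg_right h14 (show (0:ℝ) ≤ p0 + q0 by linarith)
      rw [h15] at this
      linarith [hstep1]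
    have h18 : p0 + q0 ≤ p0 * (1 + s ^ 2) := by linarith [hcase]
    have hBr1nn : (0:ℝ) ≤ B ^ (r - 1) := Real.rpow_nonneg hBpos.le _
    have hp0r1 : (0:ℝ) ≤ p0 ^ (r - 1) := Real.rpow_nonneg hp0'.le _
    have h20 : B ^ (r - 1) * p0 ^ (r - 1) * (p0 + q0)
        ≤ (1 + e * (B - 1)) * (1 + s ^ 2) * p0 ^ r := by
      calc B ^ (r - 1) * p0 ^ (r - 1) * (p0 + q0)
          ≤ B ^ (r - 1) * p0 ^ (r - 1) * (p0 * (1 + s ^ 2)) := by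
            apply mul_le_mul_of_nonneg_left h18 (by positivity)
        _ = B ^ (r - 1) * (1 + s ^ 2) * p0 ^ r := by rw [← h16]; ring
        _ ≤ (1 + e * (B - 1)) * (1 + s ^ 2) * p0 ^ r := by
            apply mul_le_mul_of_nonneg_right _ hp0r
            apply mul_le_mul_of_nonneg_right (hBr.trans hBe) (by positivity)
    have h21 : (1 + e * (B - 1)) * (1 + s ^ 2) * p0 ^ r ≤ (1 - e / 4) * p0 ^ r :=
      mul_le_mul_of_nonneg_right hnum hp0r
    have hT : (0:ℝ) ≤ (2 ^ r / s) * (p0 ^ (r - 1 / 2) * q0 ^ ((1:ℝ) / 2)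
        + p0 ^ ((1:ℝ) / 2) * q0 ^ (r - 1 / 2)) := by positivity
    linarith [h17, h20, h21, hT, hq0r, hp0r,
      mul_nonneg (by linarith : (0:ℝ) ≤ 1 - e) hq0r,
      mul_nonneg (by linarith : (0:ℝ) ≤ 1 - e) hp0r]

theorem povzner_restricted_angle (r : ℝ) (hr : 1 < r) :
    ∃ C c : ℝ, 0 < C ∧ 0 < c ∧
      ∀ p0 q0 p'0 q'0 : ℝ, 1 ≤ p0 → 1 ≤ q0 → 1 ≤ p'0 → 1 ≤ q'0 →
        p'0 + q'0 = p0 + q0 →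
        p'0 ≤ (Real.sqrt p0 + Real.sqrt q0) ^ 2 / 2 →
        q'0 ≤ p'0 →
        p'0 ^ r + q'0 ^ r - p0 ^ r - q0 ^ r ≤
          C * (p0 ^ (r - 1 / 2) * q0 ^ (1 / 2 : ℝ)
              + p0 ^ (1 / 2 : ℝ) * q0 ^ (r - 1 / 2))
            - c * (p0 ^ r + q0 ^ r) := by
  set e := min (r - 1) 1 with he
  have he0 : 0 < e := lt_min (by linarith) one_pos
  refine ⟨2 ^ r / (e / 10), e / 4,
    div_pos (Real.rpow_pos_of_pos two_pos r) (by linarith), by linarith, ?_⟩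
  intro p0 q0 p'0 q'0 hp0 hq0 hp'0 hq'0 hsum hang hqp
  rcases le_total q0 p0 with hord | hord
  · exact povzner_key r e hr he p0 q0 p'0 q'0 hp0 hq0 hord hp'0 hq'0 hsum hang hqp
  · have h := povzner_key r e hr he q0 p0 p'0 q'0 hq0 hp0 hord hp'0 hq'0
      (by linarith) (by rwa [add_comm (Real.sqrt q0) (Real.sqrt p0)]) hqp
    linarith [h]
end

section
/- Let r > 1 and p⁰, q⁰ ≥ 1. If p'⁰, q'⁰ > 0 satisfy p'⁰ + q'⁰ = p⁰ + q⁰, then G := (p'⁰)^r + (q'⁰)^r − (p⁰)^r − (q⁰)^r ≤ (p⁰+q⁰)^r − max{(p⁰)^r,(q⁰)^r} ≤ C_r ((p⁰)^{r−1} q⁰ + p⁰ (q⁰)^{r−1}) for a constant C_r depending only on r. -/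
open Real

lemma mul_rpow_sub_one_aux {x r : ℝ} (hx : 0 ≤ x) (hr : r ≠ 0) :
    x * x ^ (r - 1) = x ^ r := by
  have h := Real.rpow_add' hx (by simpa using hr : (1:ℝ) + (r - 1) ≠ 0)
  rw [Real.rpow_one] at h
  rw [show (1:ℝ) + (r - 1) = r by ring] at h
  exact h.symm

lemma rpow_sub_rpow_le_aux (r : ℝ) (hr : 1 ≤ r) {a b : ℝ} (ha : 0 ≤ a) (hab : a ≤ b)
    (hb : 0 < b) : b ^ r - a ^ r ≤ r * b ^ (r - 1) * (b - a) := by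
  have hs : -1 ≤ a / b - 1 := by
    have : 0 ≤ a / b := div_nonneg ha hb.le
    linarith
  have hber := one_add_mul_self_le_rpow_one_add hs hr
  have h1 : (1 : ℝ) + (a / b - 1) = a / b := by ring
  rw [h1] at hber
  have hdiv : (a / b) ^ r = a ^ r / b ^ r := Real.div_rpow ha hb.le r
  have hbr : (0 : ℝ) < b ^ r := Real.rpow_pos_of_pos hb r
  have h2 : (1 + r * (a / b - 1)) * b ^ r ≤ a ^ r := by
    calc (1 + r * (a / b - 1)) * b ^ r ≤ (a / b) ^ r * b ^ r :=
          mul_le_mul_of_nonneg_right hber hbr.le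
      _ = a ^ r := by rw [hdiv]; field_simp
  have hbr1 : b * b ^ (r - 1) = b ^ r := mul_rpow_sub_one_aux hb.le (by linarith)
  have h3 : r * b ^ (r - 1) * (b - a) = r * (1 - a / b) * b ^ r := by
    rw [← hbr1]; field_simp
  nlinarith [hbr]

lemma rpow_superadd (r : ℝ) (hr : 1 ≤ r) {a b : ℝ} (ha : 0 ≤ a) (hb : 0 ≤ b) :
    a ^ r + b ^ r ≤ (a + b) ^ r := by
  have hab : 0 ≤ a + b := by linarith
  have hr0 : r ≠ 0 := by linarith
  have hr1 : 0 ≤ r - 1 := by linarith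
  have h1 : a ^ r ≤ a * (a + b) ^ (r - 1) := by
    rw [← mul_rpow_sub_one_aux ha hr0]
    exact mul_le_mul_of_nonneg_left (Real.rpow_le_rpow ha (by linarith) hr1) ha
  have h2 : b ^ r ≤ b * (a + b) ^ (r - 1) := by
    rw [← mul_rpow_sub_one_aux hb hr0]
    exact mul_le_mul_of_nonneg_left (Real.rpow_le_rpow hb (by linarith) hr1) hb
  have h3 : (a + b) * (a + b) ^ (r - 1) = (a + b) ^ r := mul_rpow_sub_one_aux hab hr0
  calc a ^ r + b ^ r ≤ a * (a+b) ^ (r-1) + b * (a+b)^(r-1) := add_le_add h1 h2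
    _ = (a + b) ^ r := by rw [← h3]; ring

theorem povzner_general (r : ℝ) (hr : 1 < r) :
    ∃ C : ℝ, 0 < C ∧
      ∀ p0 q0 p'0 q'0 : ℝ, 1 ≤ p0 → 1 ≤ q0 → 0 < p'0 → 0 < q'0 →
        p'0 + q'0 = p0 + q0 →
        p'0 ^ r + q'0 ^ r - p0 ^ r - q0 ^ r ≤
            (p0 + q0) ^ r - max (p0 ^ r) (q0 ^ r) ∧
        (p0 + q0) ^ r - max (p0 ^ r) (q0 ^ r) ≤
            C * (p0 ^ (r - 1) * q0 + p0 * q0 ^ (r - 1)) := by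
  refine ⟨r * 2 ^ (r - 1), by positivity, ?_⟩
  intro p0 q0 p'0 q'0 hp hq hp' hq' hsum
  have hp0 : (0:ℝ) < p0 := lt_of_lt_of_le one_pos hp
  have hq0 : (0:ℝ) < q0 := lt_of_lt_of_le one_pos hq
  have hpq : (0:ℝ) < p0 + q0 := by linarith
  constructor
  · have h1 : p'0 ^ r + q'0 ^ r ≤ (p0 + q0) ^ r := by
      have := rpow_superadd r hr.le hp'.le hq'.le
      rwa [hsum] at this
    have hmin : min (p0 ^ r) (q0 ^ r) ≥ 0 :=
      le_min (Real.rpow_nonneg hp0.le r) (Real.rpow_nonneg hq0.le r)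
    have hmm : max (p0 ^ r) (q0 ^ r) + min (p0 ^ r) (q0 ^ r) = p0 ^ r + q0 ^ r :=
      max_add_min _ _
    linarith
  · rcases le_total q0 p0 with h | h
    · have hmax : max (p0 ^ r) (q0 ^ r) = p0 ^ r :=
        max_eq_left (Real.rpow_le_rpow hq0.le h (by linarith))
      rw [hmax]
      have key := rpow_sub_rpow_le_aux r hr.le hp0.le (by linarith : p0 ≤ p0 + q0) hpq
      rw [show (p0 + q0) - p0 = q0 by ring] at key
      have h2 : (p0 + q0) ^ (r - 1) ≤ 2 ^ (r - 1) * p0 ^ (r - 1) := by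
        rw [← Real.mul_rpow (by norm_num) hp0.le]
        exact Real.rpow_le_rpow hpq.le (by linarith) (by linarith)
      have h4 : r * (p0 + q0) ^ (r - 1) * q0 ≤ r * (2 ^ (r-1) * p0 ^ (r - 1)) * q0 :=
        mul_le_mul_of_nonneg_right
          (mul_le_mul_of_nonneg_left h2 (by linarith)) hq0.le
      have h5 : 0 ≤ r * 2 ^ (r-1) * (p0 * q0 ^ (r - 1)) := by positivity
      nlinarith
    · have hmax : max (p0 ^ r) (q0 ^ r) = q0 ^ r :=
        max_eq_right (Real.rpow_le_rpow hp0.le h (by linarith))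
      rw [hmax]
      have key := rpow_sub_rpow_le_aux r hr.le hq0.le (by linarith : q0 ≤ p0 + q0) hpq
      rw [show (p0 + q0) - q0 = p0 by ring] at key
      have h2 : (p0 + q0) ^ (r - 1) ≤ 2 ^ (r - 1) * q0 ^ (r - 1) := by
        rw [← Real.mul_rpow (by norm_num) hq0.le]
        exact Real.rpow_le_rpow hpq.le (by linarith) (by linarith)
      have h4 : r * (p0 + q0) ^ (r - 1) * p0 ≤ r * (2 ^ (r-1) * q0 ^ (r - 1)) * p0 :=
        mul_le_mul_of_nonneg_right
          (mul_le_mul_of_nonneg_left h2 (by linarith)) hp0.le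
      have h5 : 0 ≤ r * 2 ^ (r-1) * (p0 ^ (r - 1) * q0) := by positivity
      nlinarith
end
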